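/- Let m, K be natural numbers, w : Fin K → ℝ with w(v) ≥ 0 for all v, and N : Fin K → Finset (Fin m). Define F(x) = ∑_{v} w(v)·(1 − Real.exp(−∑_{j ∈ N(v)} x(j))) and, for S : Finset (Fin m), the coverage value v(S) = ∑_{v : (N(v) ∩ S).Nonempty} w(v). Then for every S : Finset (Fin m), letting 1_S be the indicator vector (1_S(j) = 1 if j ∈ S, else 0), F(1_S) ≥ (1 − 1/e)·v(S). -/

import Mathlib

/-- **Poisson rounding is a (1 − 1/e)-approximate convex rounding scheme at integral points.**
For a coverage valuation with nonnegative vertex weights `w` and incidence sets `N v`, and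
`F x = ∑ v, w v · (1 − exp(−∑_{j ∈ N v} x j))`, at the indicator vector of any set `S` we have
`F(1_S) ≥ (1 − 1/e) · v(S)`, where `v(S)` is the total weight of vertices covered by `S`. -/
theorem poisson_rounding_approx (m K : ℕ) (w : Fin K → ℝ) (hw : ∀ v, 0 ≤ w v)
    (N : Fin K → Finset (Fin m)) (S : Finset (Fin m)) :
    ∑ v : Fin K, w v * (1 - Real.exp (-∑ j ∈ N v, (if j ∈ S then (1 : ℝ) else 0)))
      ≥ (1 - (Real.exp 1)⁻¹) *
          ∑ v ∈ Finset.univ.filter (fun v : Fin K => ((N v) ∩ S).Nonempty), w v := by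
  rw [ge_iff_le, Finset.mul_sum]
  have key : ∀ v : Fin K, v ∈ Finset.univ.filter (fun v : Fin K => ((N v) ∩ S).Nonempty) →
      (1 - (Real.exp 1)⁻¹) * w v
        ≤ w v * (1 - Real.exp (-∑ j ∈ N v, (if j ∈ S then (1 : ℝ) else 0))) := by
    intro v hv
    rw [Finset.mem_filter] at hv
    have hsum : (1 : ℝ) ≤ ∑ j ∈ N v, (if j ∈ S then (1 : ℝ) else 0) := by
      obtain ⟨j, hj⟩ := hv.2
      rw [Finset.mem_inter] at hj
      calc (1 : ℝ) = ∑ i ∈ {j}, (if i ∈ S then (1 : ℝ) else 0) := by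
            simp [hj.2]
        _ ≤ _ := Finset.sum_le_sum_of_subset_of_nonneg
            (Finset.singleton_subset_iff.mpr hj.1)
            (fun i _ _ => by positivity)
    have hexp : Real.exp (-∑ j ∈ N v, (if j ∈ S then (1 : ℝ) else 0)) ≤ (Real.exp 1)⁻¹ := by
      rw [← Real.exp_neg]
      exact Real.exp_le_exp.mpr (by linarith)
    rw [mul_comm]
    exact mul_le_mul_of_nonneg_left (by linarith) (hw v)
  calc ∑ v ∈ Finset.univ.filter (fun v : Fin K => ((N v) ∩ S).Nonempty),
        (1 - (Real.exp 1)⁻¹) * w v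
      ≤ ∑ v ∈ Finset.univ.filter (fun v : Fin K => ((N v) ∩ S).Nonempty),
        w v * (1 - Real.exp (-∑ j ∈ N v, (if j ∈ S then (1 : ℝ) else 0))) :=
        Finset.sum_le_sum key
    _ ≤ ∑ v : Fin K, w v * (1 - Real.exp (-∑ j ∈ N v, (if j ∈ S then (1 : ℝ) else 0))) := by
        apply Finset.sum_le_sum_of_subset_of_nonneg (Finset.filter_subset _ _)
        intro v _ _
        have h0 : (0:ℝ) ≤ ∑ j ∈ N v, (if j ∈ S then (1 : ℝ) else 0) :=
          Finset.sum_nonneg fun i _ => by positivity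
        have : Real.exp (-∑ j ∈ N v, (if j ∈ S then (1 : ℝ) else 0)) ≤ 1 :=
          Real.exp_le_one_iff.mpr (by linarith)
        exact mul_nonneg (hw v) (by linarith)
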